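/- Let ℓ ∈ ℕ₀ and 1 ≤ k ≤ 2^ℓ. Let (U^{(i,j)}) for (i,j) = (0,1) and for 1 ≤ i ≤ ℓ, 1 ≤ j ≤ 2^{i-1} be independent random variables with U^{(i,j)} uniformly distributed on the finite set D_{q^{(i)}_ℓ}, where q^{(i)}_ℓ = 2(ℓ+1−i). Put Y^{(i,j)} = (1/σ_{q^{(i)}_ℓ}) · Φ^{-1}(U^{(i,j)}) and V_{k,ℓ} = Δ^{(0,1)}_{k,ℓ}·Y^{(0,1)} + Σ_{i=1}^{ℓ} Σ_{j=1}^{2^{i-1}} Δ^{(i,j)}_{k,ℓ}·Y^{(i,j)}. Then V_{k,ℓ} has mean zero and variance exactly 2^{-ℓ}. -/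

import Mathlib

open MeasureTheory ProbabilityTheory

/-- `Φ`, the cumulative distribution function of the standard normal distribution. -/
noncomputable def stdNormalCDF (y : ℝ) : ℝ := (gaussianReal 0 1 (Set.Iic y)).toReal

/-- `Φ⁻¹`, the inverse of the standard normal CDF (on `(0,1)`). -/
noncomputable def stdNormalCDFInv : ℝ → ℝ := Function.invFun stdNormalCDF

/-- `D_q`, the set of midpoints of the dyadic subintervals of `[0,1]` of length `2^{-q}`. -/
noncomputable def Dq (q : ℕ) : Finset ℝ :=
  Finset.image (fun m : ℕ => (m : ℝ) / 2 ^ q + 1 / 2 ^ (q + 1)) (Finset.range (2 ^ q))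

/-- `σ_q = (2^{-q} Σ_{x ∈ D_q} (Φ⁻¹(x))²)^{1/2}`. -/
noncomputable def sigmaq (q : ℕ) : ℝ :=
  Real.sqrt (((2 : ℝ) ^ q)⁻¹ * ∑ x ∈ Dq q, stdNormalCDFInv x ^ 2)

/-- The Haar functions on `[0,1]`. -/
noncomputable def haar : ℕ → ℕ → ℝ → ℝ
  | 0, _, _ => 1
  | (i + 1), j, t =>
      2 ^ ((i : ℝ) / 2) *
        ((Set.Ico (((j : ℝ) - 1) / 2 ^ i) (((j : ℝ) - 1 / 2) / 2 ^ i)).indicator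
            (fun _ => (1 : ℝ)) t
          - (Set.Ico (((j : ℝ) - 1 / 2) / 2 ^ i) ((j : ℝ) / 2 ^ i)).indicator
            (fun _ => (1 : ℝ)) t)

/-- The Schauder functions `s^{(i,j)}(t) = ∫_0^t h^{(i,j)}(u) du`. -/
noncomputable def schauder (i j : ℕ) (t : ℝ) : ℝ := ∫ u in (0 : ℝ)..t, haar i j u

/-- The Schauder increments `Δ^{(i,j)}_{k,ℓ}`. -/
noncomputable def schauderInc (i j k ℓ : ℕ) : ℝ :=
  schauder i j ((k : ℝ) / 2 ^ ℓ) - schauder i j (((k : ℝ) - 1) / 2 ^ ℓ)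

/-- The index pairs `(i,j)` appearing in the level-`ℓ` Lévy–Ciesielski construction:
`(0,1)` and `(i,j)` with `1 ≤ i ≤ ℓ`, `1 ≤ j ≤ 2^{i-1}`. -/
def ValidPair (ℓ : ℕ) (p : ℕ × ℕ) : Prop :=
  p = (0, 1) ∨ (1 ≤ p.1 ∧ p.1 ≤ ℓ ∧ 1 ≤ p.2 ∧ p.2 ≤ 2 ^ (p.1 - 1))


open MeasureTheory ProbabilityTheory Set
open scoped ENNReal

namespace LCAux


lemma gauss_Ioc (y z : ℝ) (h : y ≤ z) :
    stdNormalCDF z = stdNormalCDF y + ((gaussianReal 0 1) (Ioc y z)).toReal := by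
  unfold stdNormalCDF
  rw [← ENNReal.toReal_add (measure_ne_top _ _) (measure_ne_top _ _),
    ← measure_union (Iic_disjoint_Ioc le_rfl) measurableSet_Ioc, Iic_union_Ioc_eq_Iic h]

lemma gauss_Ioc_le (y z : ℝ) : (gaussianReal 0 1) (Ioc y z) ≤ ENNReal.ofReal (z - y) := by
  rw [gaussianReal_apply 0 one_ne_zero]
  calc ∫⁻ x in Ioc y z, gaussianPDF 0 1 x ≤ ∫⁻ _ in Ioc y z, 1 := by
        refine setLIntegral_mono_ae (by fun_prop) (ae_of_all _ fun x _ => ?_)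
        rw [gaussianPDF]
        refine ENNReal.ofReal_le_one.mpr ?_
        unfold gaussianPDFReal
        rw [NNReal.coe_one, mul_one]
        have h1 : (1:ℝ) ≤ Real.sqrt (2 * Real.pi) := by
          rw [show (1:ℝ) = Real.sqrt 1 by simp]
          exact Real.sqrt_le_sqrt (by nlinarith [Real.pi_gt_three])
        have h2 : Real.exp (-(x-0)^2/(2*1)) ≤ 1 := by
          rw [Real.exp_le_one_iff]
          have : (0:ℝ) ≤ (x-0)^2 := sq_nonneg _
          linarith
        calc (Real.sqrt (2 * Real.pi))⁻¹ * Real.exp (-(x-0)^2/(2*1)) ≤ 1 * 1 := by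
              apply mul_le_mul _ h2 (Real.exp_nonneg _) zero_le_one
              exact inv_le_one_of_one_le₀ h1
          _ = 1 := by ring
    _ = ENNReal.ofReal (z - y) := by
        rw [setLIntegral_one, Real.volume_Ioc]

lemma gauss_Ioc_pos (y z : ℝ) (h : y < z) : 0 < (gaussianReal 0 1) (Ioc y z) := by
  rcases eq_or_lt_of_le (show (0:ℝ≥0∞) ≤ (gaussianReal 0 1) (Ioc y z) from zero_le) with h0 | h0
  · exfalso
    have := gaussianReal_absolutelyContinuous' (0:ℝ) (one_ne_zero) (s := Ioc y z) h0.symm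
    rw [Real.volume_Ioc] at this
    simp only [ENNReal.ofReal_eq_zero] at this
    linarith
  · exact h0

lemma Phi_strictMono : StrictMono stdNormalCDF := by
  intro y z h
  rw [gauss_Ioc y z h.le]
  have := gauss_Ioc_pos y z h
  have hne : (gaussianReal 0 1) (Ioc y z) ≠ ⊤ := measure_ne_top _ _
  have : 0 < ((gaussianReal 0 1) (Ioc y z)).toReal := ENNReal.toReal_pos this.ne' hne
  linarith

lemma Phi_mono : Monotone stdNormalCDF := Phi_strictMono.monotone

lemma Phi_lipschitz : LipschitzWith 1 stdNormalCDF := by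
  refine LipschitzWith.of_dist_le_mul fun y z => ?_
  wlog h : z ≤ y generalizing y z
  · rw [dist_comm, dist_comm y z]; exact this z y (le_of_not_ge h)
  rw [Real.dist_eq, Real.dist_eq, abs_of_nonneg (sub_nonneg.mpr (Phi_mono h)),
    abs_of_nonneg (sub_nonneg.mpr h), NNReal.coe_one, one_mul]
  rw [gauss_Ioc z y h]
  have := gauss_Ioc_le z y
  have h2 : ((gaussianReal 0 1) (Ioc z y)).toReal ≤ y - z := by
    exact ENNReal.toReal_le_of_le_ofReal (by linarith) this
  linarith

lemma Phi_continuous : Continuous stdNormalCDF := Phi_lipschitz.continuous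

lemma Phi_neg (y : ℝ) : stdNormalCDF (-y) = 1 - stdNormalCDF y := by
  have hmap : (gaussianReal 0 1).map (fun x => (-1 : ℝ) * x) = gaussianReal 0 1 := by
    have := gaussianReal_map_const_mul (μ := 0) (v := 1) (-1)
    simpa using this
  have h1 : (gaussianReal 0 1) (Iic (-y)) = (gaussianReal 0 1) (Ici y) := by
    conv_lhs => rw [← hmap]
    rw [Measure.map_apply (by fun_prop) measurableSet_Iic]
    congr 1
    ext x
    simp only [mem_preimage, mem_Iic, mem_Ici]
    constructor <;> intro h <;> linarith
  have h2 : (gaussianReal 0 1) (Ici y) = (gaussianReal 0 1) (Ioi y) := by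
    have : (gaussianReal 0 1) {y} = 0 :=
      gaussianReal_absolutelyContinuous 0 one_ne_zero (Real.volume_singleton)
    refine le_antisymm ?_ (measure_mono Ioi_subset_Ici_self)
    calc (gaussianReal 0 1) (Ici y) = (gaussianReal 0 1) ({y} ∪ Ioi y) := by
          rw [Set.singleton_union]
          congr 1
          exact Set.Ioi_insert.symm
      _ ≤ (gaussianReal 0 1) {y} + (gaussianReal 0 1) (Ioi y) := measure_union_le _ _
      _ = (gaussianReal 0 1) (Ioi y) := by rw [this, zero_add]
  have h3 : (gaussianReal 0 1) (Ioi y) = 1 - (gaussianReal 0 1) (Iic y) := by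
    rw [← compl_Iic, measure_compl measurableSet_Iic (measure_ne_top _ _), measure_univ]
  unfold stdNormalCDF
  rw [h1, h2, h3, ENNReal.toReal_sub_of_le prob_le_one (by simp)]
  simp

lemma Phi_mem_Ioo (y : ℝ) : stdNormalCDF y ∈ Ioo (0:ℝ) 1 := by
  constructor
  · have := gauss_Ioc_pos (y - 1) y (by linarith)
    have h2 : (0:ℝ) < ((gaussianReal 0 1) (Ioc (y-1) y)).toReal :=
      ENNReal.toReal_pos this.ne' (measure_ne_top _ _)
    have h3 := gauss_Ioc (y - 1) y (by linarith)
    have h4 : 0 ≤ stdNormalCDF (y - 1) := ENNReal.toReal_nonneg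
    linarith
  · have h1 : stdNormalCDF y = 1 - stdNormalCDF (-y) := by
      have := Phi_neg y; linarith [Phi_neg y]
    have := gauss_Ioc_pos (-y - 1) (-y) (by linarith)
    have h2 : (0:ℝ) < ((gaussianReal 0 1) (Ioc (-y-1) (-y))).toReal :=
      ENNReal.toReal_pos this.ne' (measure_ne_top _ _)
    have h3 := gauss_Ioc (-y - 1) (-y) (by linarith)
    have h4 : 0 ≤ stdNormalCDF (-y - 1) := ENNReal.toReal_nonneg
    linarith

lemma Phi_surjOn : ∀ x ∈ Ioo (0:ℝ) 1, ∃ y, stdNormalCDF y = x := by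
  intro x hx
  have htop : Filter.Tendsto stdNormalCDF Filter.atTop (nhds 1) := by
    have : stdNormalCDF = cdf (gaussianReal 0 1) := by
      ext y; rw [cdf_eq_real]; rfl
    rw [this]; exact tendsto_cdf_atTop _
  have hbot : Filter.Tendsto stdNormalCDF Filter.atBot (nhds 0) := by
    have : stdNormalCDF = cdf (gaussianReal 0 1) := by
      ext y; rw [cdf_eq_real]; rfl
    rw [this]; exact tendsto_cdf_atBot _
  obtain ⟨b, hb⟩ := (htop.eventually (eventually_gt_nhds hx.2)).exists
  obtain ⟨a, ha⟩ := (hbot.eventually (eventually_lt_nhds hx.1)).exists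
  have hab : a ≤ b := by
    by_contra hc
    push_neg at hc
    exact absurd (Phi_mono hc.le) (by linarith)
  obtain ⟨y, _, hy⟩ := intermediate_value_Icc hab (Phi_continuous.continuousOn)
    (⟨ha.le, hb.le⟩ : x ∈ Icc (stdNormalCDF a) (stdNormalCDF b))
  exact ⟨y, hy⟩

lemma Phi_inv_eq {x : ℝ} (hx : x ∈ Ioo (0:ℝ) 1) : stdNormalCDF (stdNormalCDFInv x) = x :=
  Function.invFun_eq (Phi_surjOn x hx)

lemma Phi_leftInv (y : ℝ) : stdNormalCDFInv (stdNormalCDF y) = y :=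
  Function.leftInverse_invFun Phi_strictMono.injective y

lemma Phi_zero : stdNormalCDF 0 = 1 / 2 := by
  have := Phi_neg 0
  rw [neg_zero] at this
  linarith

lemma PhiInv_one_sub {x : ℝ} (hx : x ∈ Ioo (0:ℝ) 1) :
    stdNormalCDFInv (1 - x) = - stdNormalCDFInv x := by
  have h1 : stdNormalCDF (-(stdNormalCDFInv x)) = 1 - x := by
    rw [Phi_neg, Phi_inv_eq hx]
  rw [← h1, Phi_leftInv]

lemma PhiInv_ne_zero {x : ℝ} (hx : x ∈ Ioo (0:ℝ) 1) (hx2 : x ≠ 1/2) :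
    stdNormalCDFInv x ≠ 0 := by
  intro h
  apply hx2
  rw [← Phi_inv_eq hx, h, Phi_zero]

lemma PhiInv_half : stdNormalCDFInv (1/2) = 0 := by
  rw [← Phi_zero, Phi_leftInv]



lemma Dq_subset_Ioo {q : ℕ} {x : ℝ} (hx : x ∈ Dq q) : x ∈ Ioo (0:ℝ) 1 := by
  simp only [Dq, Finset.mem_image, Finset.mem_range] at hx
  obtain ⟨m, hm, rfl⟩ := hx
  have h2q : (0:ℝ) < 2 ^ q := by positivity
  constructor
  · positivity
  · have hm' : (m:ℝ) ≤ 2 ^ q - 1 := by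
      have : (m:ℝ) + 1 ≤ ((2:ℝ))^q := by exact_mod_cast Nat.succ_le_of_lt hm
      linarith
    have : (m:ℝ) / 2^q ≤ (2^q - 1) / 2^q := by gcongr
    have h1 : ((2:ℝ)^q - 1) / 2^q = 1 - (2^q)⁻¹ := by field_simp
    have h2 : (1:ℝ) / 2^(q+1) < (2^q)⁻¹ := by
      rw [one_div, pow_succ]
      rw [inv_lt_inv₀ (by positivity) (by positivity)]
      nlinarith
    calc (m:ℝ)/2^q + 1/2^(q+1) < (1 - (2^q)⁻¹) + (2^q)⁻¹ := by
          rw [← h1]; exact add_lt_add_of_le_of_lt this h2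
      _ = 1 := by ring

lemma Dq_card (q : ℕ) : (Dq q).card = 2 ^ q := by
  rw [Dq, Finset.card_image_of_injective _ ?_, Finset.card_range]
  intro a b hab
  have h2q : (0:ℝ) < 2 ^ q := by positivity
  have : (a:ℝ) = b := by
    field_simp at hab
    have h3 : ((a:ℝ) - b) * 2^(q+1) = 0 := by linarith
    rcases mul_eq_zero.mp h3 with h4 | h4
    · linarith
    · exact absurd h4 (by positivity)
  exact_mod_cast this

lemma Dq_nonempty (q : ℕ) : (Dq q).Nonempty := by
  rw [← Finset.card_pos, Dq_card]; positivity

lemma Dq_symm {q : ℕ} {x : ℝ} (hx : x ∈ Dq q) : 1 - x ∈ Dq q := by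
  simp only [Dq, Finset.mem_image, Finset.mem_range] at hx ⊢
  obtain ⟨m, hm, rfl⟩ := hx
  refine ⟨2^q - 1 - m, by omega, ?_⟩
  have hm' : (m:ℝ) ≤ 2^q - 1 := by
    have : (m:ℝ) + 1 ≤ ((2:ℝ))^q := by exact_mod_cast Nat.succ_le_of_lt hm
    linarith
  have hcast : ((2^q - 1 - m : ℕ) : ℝ) = 2^q - 1 - m := by
    have h1 : 2^q - 1 - m = 2^q - (1 + m) := by omega
    rw [h1, Nat.cast_sub (by omega : 1 + m ≤ 2^q)]
    push_cast
    ring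
  rw [hcast]
  have h2q : (0:ℝ) < 2 ^ q := by positivity
  field_simp
  ring

lemma sum_PhiInv_Dq (q : ℕ) : ∑ x ∈ Dq q, stdNormalCDFInv x = 0 := by
  refine Finset.sum_involution (fun x _ => 1 - x) ?_ ?_ (fun a ha => Dq_symm ha) ?_
  · intro a ha
    rw [PhiInv_one_sub (Dq_subset_Ioo ha)]
    ring
  · intro a ha hfa h
    apply hfa
    have : a = 1/2 := by
      have h' : 1 - a = a := h
      linarith
    rw [this, PhiInv_half]
  · intro a ha
    simp

lemma sum_sq_pos {q : ℕ} (hq : 1 ≤ q) : 0 < ∑ x ∈ Dq q, stdNormalCDFInv x ^ 2 := by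
  apply Finset.sum_pos' (fun x _ => sq_nonneg _)
  set x₀ : ℝ := (1:ℝ)/2^q + 1/2^(q+1) with hx₀
  have hmem : x₀ ∈ Dq q := by
    simp only [Dq, Finset.mem_image, Finset.mem_range]
    refine ⟨1, ?_, by push_cast; ring⟩
    have : 2^1 ≤ 2^q := Nat.pow_le_pow_right (by omega) hq
    omega
  refine ⟨x₀, hmem, ?_⟩
  have hIoo := Dq_subset_Ioo hmem
  have hne : x₀ ≠ 1/2 := by
    have h2q : (2:ℝ)^q ≥ 2 := by
      calc (2:ℝ)^q ≥ 2^1 := by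
            apply pow_le_pow_right₀ (by norm_num) hq
        _ = 2 := by norm_num
    have : x₀ = 1/2^q + 1/2^(q+1) := rfl
    rw [this]
    intro h
    rw [pow_succ] at h
    have h2q0 : (2:ℝ)^q > 0 := by positivity
    field_simp at h
    rcases Nat.lt_or_ge q 2 with hq2 | hq2
    · interval_cases q
      · norm_num at h
    · have : (4:ℝ) ≤ 2^q := by
        calc (4:ℝ) = 2^2 := by norm_num
          _ ≤ 2^q := by
              apply pow_le_pow_right₀ (by norm_num) hq2
      linarith
  have := PhiInv_ne_zero hIoo hne
  positivity

lemma sigmaq_pos {q : ℕ} (hq : 1 ≤ q) : 0 < sigmaq q := by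
  apply Real.sqrt_pos.mpr
  have := sum_sq_pos hq
  positivity

lemma sigmaq_sq {q : ℕ} : sigmaq q ^ 2 = ((2:ℝ)^q)⁻¹ * ∑ x ∈ Dq q, stdNormalCDFInv x ^ 2 := by
  rw [sigmaq, Real.sq_sqrt]
  have : (0:ℝ) ≤ ∑ x ∈ Dq q, stdNormalCDFInv x ^ 2 :=
    Finset.sum_nonneg fun x _ => sq_nonneg _
  positivity

-- uniformOn lemmas
lemma uniformOn_finset_compl (s : Finset ℝ) : uniformOn (↑s : Set ℝ) (↑s)ᶜ = 0 := by
  rw [uniformOn, cond_apply s.measurableSet]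
  simp

lemma ae_mem_uniformOn (s : Finset ℝ) : ∀ᵐ x ∂(uniformOn (↑s : Set ℝ)), x ∈ s := by
  rw [ae_iff]
  have h : {x : ℝ | ¬ x ∈ s} = (↑s : Set ℝ)ᶜ := by ext x; simp
  rw [h]
  exact uniformOn_finset_compl s

lemma uniformOn_finset_singleton (s : Finset ℝ) {x : ℝ} (hx : x ∈ s) :
    uniformOn (↑s : Set ℝ) {x} = (s.card : ℝ≥0∞)⁻¹ := by
  rw [uniformOn, cond_apply s.measurableSet, Measure.count_apply_finset]
  have : (↑s : Set ℝ) ∩ {x} = {x} := by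
    rw [Set.inter_eq_right]; simpa using hx
  rw [this, Measure.count_singleton, mul_one]

lemma aestronglyMeasurable_uniformOn (s : Finset ℝ) (f : ℝ → ℝ) :
    AEStronglyMeasurable f (uniformOn (↑s : Set ℝ)) := by
  classical
  refine ⟨fun x => ∑ y ∈ s, Set.indicator {y} (fun _ => f y) x, ?_, ?_⟩
  · apply Measurable.stronglyMeasurable
    exact Finset.measurable_sum _ fun y _ =>
      (measurable_const).indicator (measurableSet_singleton y)
  · filter_upwards [ae_mem_uniformOn s] with x hx
    rw [Finset.sum_eq_single x]
    · simp
    · intro y _ hyx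
      apply Set.indicator_of_notMem
      simp [Ne.symm hyx]
    · intro h; exact absurd hx h

lemma integrable_uniformOn (s : Finset ℝ) (hs : s.Nonempty) (f : ℝ → ℝ) :
    Integrable f (uniformOn (↑s : Set ℝ)) := by
  have : IsProbabilityMeasure (uniformOn (↑s : Set ℝ)) :=
    uniformOn_isProbabilityMeasure s.finite_toSet (by simpa using hs)
  apply Integrable.mono' (g := fun _ => ∑ y ∈ s, |f y|)
  · exact integrable_const _
  · exact aestronglyMeasurable_uniformOn s f
  · filter_upwards [ae_mem_uniformOn s] with x hx
    rw [Real.norm_eq_abs]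
    exact Finset.single_le_sum (f := fun y => |f y|) (fun y _ => abs_nonneg _) hx

lemma integral_uniformOn (s : Finset ℝ) (hs : s.Nonempty) (f : ℝ → ℝ) :
    ∫ x, f x ∂(uniformOn (↑s : Set ℝ)) = (s.card : ℝ)⁻¹ * ∑ x ∈ s, f x := by
  have hres : (uniformOn (↑s : Set ℝ)).restrict ↑s = uniformOn (↑s : Set ℝ) :=
    Measure.restrict_eq_self_of_ae_mem (ae_mem_uniformOn s)
  rw [← hres, integral_finset s ((integrable_uniformOn s hs f).restrict)]
  rw [Finset.mul_sum]
  refine Finset.sum_congr rfl fun x hx => ?_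
  rw [measureReal_def, uniformOn_finset_singleton s hx]
  rw [ENNReal.toReal_inv]
  simp [smul_eq_mul]



lemma schauderInc_zero (j k ℓ : ℕ) : schauderInc 0 j k ℓ = ((2:ℝ)^ℓ)⁻¹ := by
  unfold schauderInc schauder
  have h : ∀ t : ℝ, ∫ u in (0:ℝ)..t, haar 0 j u = t := by
    intro t
    have : haar 0 j = fun _ => (1:ℝ) := rfl
    rw [this]
    simp
  rw [h, h]
  ring

lemma vol_inter_subset {a b c d : ℝ} (h1 : c ≤ a) (h2 : b ≤ d) (hab : a ≤ b) :
    volume (Ico c d ∩ Ioc a b) = ENNReal.ofReal (b - a) := by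
  apply le_antisymm
  · calc volume (Ico c d ∩ Ioc a b) ≤ volume (Ioc a b) := measure_mono inter_subset_right
      _ = ENNReal.ofReal (b - a) := Real.volume_Ioc
  · calc ENNReal.ofReal (b - a) = volume (Ioo a b) := Real.volume_Ioo.symm
      _ ≤ volume (Ico c d ∩ Ioc a b) := by
          apply measure_mono
          intro x hx
          exact ⟨⟨by linarith [hx.1], by linarith [hx.2]⟩, hx.1, hx.2.le⟩

lemma vol_inter_zero {a b c d : ℝ} (h : b ≤ c ∨ d ≤ a) :
    volume (Ico c d ∩ Ioc a b) = 0 := by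
  rcases h with h | h
  · refine measure_mono_null (t := {c}) ?_ Real.volume_singleton
    intro x hx
    have h1 := hx.1.1
    have h2 := hx.2.2
    have : x = c := le_antisymm (by linarith) (by linarith)
    simp [this]
  · refine measure_mono_null (t := (∅ : Set ℝ)) ?_ (by simp)
    intro x hx
    exact absurd (lt_of_lt_of_le hx.1.2 (h.trans hx.2.1.le)) (lt_irrefl x)

lemma integrable_indicator_Ico (a b c d : ℝ) :
    IntegrableOn ((Ico c d).indicator (fun _ => (1:ℝ))) (Ioc a b) volume := by
  apply Integrable.indicator _ measurableSet_Ico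
  exact integrable_const 1

lemma integral_indicator_Ico {a b : ℝ} (c d : ℝ) (hab : a ≤ b) :
    ∫ u in a..b, (Ico c d).indicator (fun _ => (1:ℝ)) u
      = (volume (Ico c d ∩ Ioc a b)).toReal := by
  rw [intervalIntegral.integral_of_le hab, integral_indicator measurableSet_Ico,
    Measure.restrict_restrict measurableSet_Ico]
  simp [Real.volume_Ioc, measureReal_def]

lemma intervalIntegrable_indicator_Ico (a b c d : ℝ) :
    IntervalIntegrable ((Ico c d).indicator (fun _ => (1:ℝ))) volume a b := by
  constructor <;> exact integrable_indicator_Ico _ _ _ _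

lemma integrable_haar (i j : ℕ) (a b : ℝ) :
    IntervalIntegrable (haar (i+1) j) volume a b := by
  apply IntervalIntegrable.const_mul
  exact (intervalIntegrable_indicator_Ico _ _ _ _).sub (intervalIntegrable_indicator_Ico _ _ _ _)

lemma schauderInc_succ (i j k ℓ : ℕ) (hk1 : 1 ≤ k) :
    schauderInc (i+1) j k ℓ =
      2 ^ ((i : ℝ) / 2) *
        ((volume (Ico (((j:ℝ)-1)/2^i) (((j:ℝ)-1/2)/2^i) ∩
            Ioc (((k:ℝ)-1)/2^ℓ) ((k:ℝ)/2^ℓ))).toReal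
         - (volume (Ico (((j:ℝ)-1/2)/2^i) ((j:ℝ)/2^i) ∩
            Ioc (((k:ℝ)-1)/2^ℓ) ((k:ℝ)/2^ℓ))).toReal) := by
  have hab : ((k:ℝ)-1)/2^ℓ ≤ (k:ℝ)/2^ℓ := by
    exact div_le_div_of_nonneg_right (by linarith) (by positivity)
  unfold schauderInc schauder
  rw [intervalIntegral.integral_interval_sub_left (integrable_haar i j 0 ((k:ℝ)/2^ℓ))
    (integrable_haar i j 0 (((k:ℝ)-1)/2^ℓ))]
  have : ∀ u, haar (i+1) j u = 2 ^ ((i : ℝ) / 2) *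
      ((Ico (((j:ℝ)-1)/2^i) (((j:ℝ)-1/2)/2^i)).indicator (fun _ => (1:ℝ)) u
        - (Ico (((j:ℝ)-1/2)/2^i) ((j:ℝ)/2^i)).indicator (fun _ => (1:ℝ)) u) := fun u => rfl
  rw [intervalIntegral.integral_congr (g := fun u => 2 ^ ((i : ℝ) / 2) *
      ((Ico (((j:ℝ)-1)/2^i) (((j:ℝ)-1/2)/2^i)).indicator (fun _ => (1:ℝ)) u
        - (Ico (((j:ℝ)-1/2)/2^i) ((j:ℝ)/2^i)).indicator (fun _ => (1:ℝ)) u)) (fun u _ => this u)]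
  rw [intervalIntegral.integral_const_mul]
  rw [intervalIntegral.integral_sub (intervalIntegrable_indicator_Ico _ _ _ _) (intervalIntegrable_indicator_Ico _ _ _ _)]
  rw [integral_indicator_Ico _ _ hab, integral_indicator_Ico _ _ hab]


lemma rpow_half_sq (i : ℕ) : ((2:ℝ) ^ ((i : ℝ) / 2))^2 = (2:ℝ)^i := by
  rw [← Real.rpow_natCast ((2:ℝ) ^ ((i : ℝ) / 2)) 2, ← Real.rpow_mul (by norm_num)]
  rw [show (i:ℝ)/2 * (2:ℕ) = (i:ℝ) by push_cast; ring, Real.rpow_natCast]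

lemma schauderInc_sq (i j k ℓ : ℕ) (hi : i < ℓ) (hk1 : 1 ≤ k) (hk2 : k ≤ 2^ℓ)
    (hj1 : 1 ≤ j) :
    (schauderInc (i+1) j k ℓ)^2 =
      if j = (k-1)/2^(ℓ-i) + 1 then (2:ℝ)^i * (((2:ℝ)^ℓ)⁻¹)^2 else 0 := by
  set n := ℓ - i with hn'
  have hn1 : 1 ≤ n := by omega
  have hin : i + n = ℓ := by omega
  have h2n : (0:ℕ) < 2^n := Nat.pow_pos (by norm_num)
  have hpow : (2:ℝ)^i * (2:ℝ)^n = 2^ℓ := by rw [← pow_add, hin]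
  have h2ℓ : (0:ℝ) < 2^ℓ := by positivity
  have h2i : (0:ℝ) < 2^i := by positivity
  have h2nR : (0:ℝ) < 2^n := by positivity
  have hhalf : (2:ℝ)^n = 2 * 2^(n-1) := by
    rw [← pow_succ']
    congr 1
    omega
  -- endpoints over common denominator
  have hc : ((j:ℝ)-1)/2^i = (((j:ℝ)-1)*2^n)/2^ℓ := by
    rw [← hpow]; field_simp
  have hm : ((j:ℝ)-1/2)/2^i = (((j:ℝ)-1)*2^n + 2^(n-1))/2^ℓ := by
    rw [← hpow]; field_simp; rw [hhalf]; ring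
  have hd : ((j:ℝ))/2^i = ((j:ℝ)*2^n)/2^ℓ := by
    rw [← hpow]; field_simp
  have hsq := rpow_half_sq i
  have hdivle : ∀ x y : ℝ, x ≤ y → x / 2^ℓ ≤ y / 2^ℓ := fun x y h => by gcongr
  rw [schauderInc_succ i j k ℓ hk1]
  by_cases hj : j = (k-1)/2^n + 1
  · rw [if_pos hj]
    -- j is the special index
    have hjd : j - 1 = (k-1)/2^n := by omega
    have hca : (((j:ℝ)-1)*2^n) ≤ (k:ℝ)-1 := by
      have h1 : (j-1) * 2^n ≤ k - 1 := by
        rw [hjd]; exact Nat.div_mul_le_self _ _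
      have h2 : ((j-1:ℕ):ℝ) = (j:ℝ)-1 := by
        rw [Nat.cast_sub hj1]; norm_num
      calc (((j:ℝ)-1)*2^n) = (((j-1) * 2^n : ℕ) : ℝ) := by push_cast [h2]; ring
        _ ≤ (((k-1:ℕ)):ℝ) := by exact_mod_cast h1
        _ = (k:ℝ)-1 := by rw [Nat.cast_sub hk1]; norm_num
    have hbd : (k:ℝ) ≤ (j:ℝ)*2^n := by
      have h1 : k - 1 < 2^n * ((k-1)/2^n) + 2^n := by
        have h0 := Nat.div_add_mod (k-1) (2^n)
        have hm2 := Nat.mod_lt (k-1) h2n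
        omega
      have h2 : k ≤ 2^n * j := by
        rw [hj, Nat.mul_add, Nat.mul_one]
        have hcomm : (k-1)/2^n * 2^n = 2^n * ((k-1)/2^n) := Nat.mul_comm _ _
        omega
      calc (k:ℝ) = ((k:ℕ):ℝ) := rfl
        _ ≤ ((2^n * j : ℕ):ℝ) := by exact_mod_cast h2
        _ = (j:ℝ)*2^n := by push_cast; ring
    set r := (k-1) % 2^n with hr'
    have hrdm : 2^n * ((k-1)/2^n) + r = k - 1 := Nat.div_add_mod _ _
    have hkr : k - 1 = (j-1) * 2^n + r := by
      rw [hjd]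
      have hcomm : (k-1)/2^n * 2^n = 2^n * ((k-1)/2^n) := Nat.mul_comm _ _
      omega
    by_cases hrh : r < 2^(n-1)
    · -- first half
      have hbm : (k:ℝ) ≤ ((j:ℝ)-1)*2^n + 2^(n-1) := by
        have h1 : k ≤ (j-1)*2^n + 2^(n-1) := by omega
        have h2 : ((j-1:ℕ):ℝ) = (j:ℝ)-1 := by rw [Nat.cast_sub hj1]; norm_num
        calc (k:ℝ) = ((k:ℕ):ℝ) := rfl
          _ ≤ (((j-1)*2^n + 2^(n-1) : ℕ):ℝ) := by exact_mod_cast h1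
          _ = ((j:ℝ)-1)*2^n + 2^(n-1) := by push_cast [h2]; ring
      have hv1 : volume (Ico (((j:ℝ)-1)/2^i) (((j:ℝ)-1/2)/2^i) ∩
          Ioc (((k:ℝ)-1)/2^ℓ) ((k:ℝ)/2^ℓ)) = ENNReal.ofReal ((k:ℝ)/2^ℓ - ((k:ℝ)-1)/2^ℓ) := by
        rw [hc, hm]
        exact vol_inter_subset (hdivle _ _ hca) (hdivle _ _ hbm) (hdivle _ _ (by linarith))
      have hv2 : volume (Ico (((j:ℝ)-1/2)/2^i) ((j:ℝ)/2^i) ∩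
          Ioc (((k:ℝ)-1)/2^ℓ) ((k:ℝ)/2^ℓ)) = 0 := by
        rw [hm]
        exact vol_inter_zero (Or.inl (hdivle _ _ hbm))
      rw [hv1, hv2]
      rw [ENNReal.toReal_ofReal (by
        have := hdivle _ _ (show (k:ℝ)-1 ≤ (k:ℝ) by linarith)
        linarith)]
      have hba : (k:ℝ)/2^ℓ - ((k:ℝ)-1)/2^ℓ = (2^ℓ:ℝ)⁻¹ := by field_simp; ring
      rw [hba]
      simp only [ENNReal.toReal_zero, sub_zero]
      rw [mul_pow, hsq]
    · -- second half
      have hma : ((j:ℝ)-1)*2^n + 2^(n-1) ≤ (k:ℝ)-1 := by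
        have h1 : (j-1)*2^n + 2^(n-1) ≤ k - 1 := by omega
        have h2 : ((j-1:ℕ):ℝ) = (j:ℝ)-1 := by rw [Nat.cast_sub hj1]; norm_num
        calc ((j:ℝ)-1)*2^n + 2^(n-1) = (((j-1)*2^n + 2^(n-1) : ℕ):ℝ) := by push_cast [h2]; ring
          _ ≤ ((k-1:ℕ):ℝ) := by exact_mod_cast h1
          _ = (k:ℝ)-1 := by rw [Nat.cast_sub hk1]; norm_num
      have hv1 : volume (Ico (((j:ℝ)-1)/2^i) (((j:ℝ)-1/2)/2^i) ∩
          Ioc (((k:ℝ)-1)/2^ℓ) ((k:ℝ)/2^ℓ)) = 0 := by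
        rw [hm]
        exact vol_inter_zero (Or.inr (hdivle _ _ hma))
      have hv2 : volume (Ico (((j:ℝ)-1/2)/2^i) ((j:ℝ)/2^i) ∩
          Ioc (((k:ℝ)-1)/2^ℓ) ((k:ℝ)/2^ℓ)) = ENNReal.ofReal ((k:ℝ)/2^ℓ - ((k:ℝ)-1)/2^ℓ) := by
        rw [hm, hd]
        exact vol_inter_subset (hdivle _ _ hma) (hdivle _ _ hbd) (hdivle _ _ (by linarith))
      rw [hv1, hv2]
      rw [ENNReal.toReal_ofReal (by
        have := hdivle _ _ (show (k:ℝ)-1 ≤ (k:ℝ) by linarith)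
        linarith)]
      have hba : (k:ℝ)/2^ℓ - ((k:ℝ)-1)/2^ℓ = (2^ℓ:ℝ)⁻¹ := by field_simp; ring
      rw [hba]
      simp only [ENNReal.toReal_zero, zero_sub]
      rw [mul_pow, hsq, neg_pow]
      norm_num
  · rw [if_neg hj]
    have hcases : (k-1)/2^n < j - 1 ∨ j - 1 < (k-1)/2^n := by omega
    rcases hcases with hcase | hcase
    · -- interval entirely to the left of support : b ≤ c
      have hnat : k ≤ (j-1) * 2^n := by
        have := (Nat.div_lt_iff_lt_mul h2n).mp hcase
        omega
      have hbc : (k:ℝ) ≤ ((j:ℝ)-1)*2^n := by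
        have h2 : ((j-1:ℕ):ℝ) = (j:ℝ)-1 := by rw [Nat.cast_sub hj1]; norm_num
        calc (k:ℝ) = ((k:ℕ):ℝ) := rfl
          _ ≤ (((j-1)*2^n : ℕ):ℝ) := by exact_mod_cast hnat
          _ = ((j:ℝ)-1)*2^n := by push_cast [h2]; ring
      have hcm : ((j:ℝ)-1)*2^n ≤ ((j:ℝ)-1)*2^n + 2^(n-1) := by
        have : (0:ℝ) < 2^(n-1) := by positivity
        linarith
      have hv1 : volume (Ico (((j:ℝ)-1)/2^i) (((j:ℝ)-1/2)/2^i) ∩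
          Ioc (((k:ℝ)-1)/2^ℓ) ((k:ℝ)/2^ℓ)) = 0 := by
        rw [hc]
        exact vol_inter_zero (Or.inl (hdivle _ _ hbc))
      have hv2 : volume (Ico (((j:ℝ)-1/2)/2^i) ((j:ℝ)/2^i) ∩
          Ioc (((k:ℝ)-1)/2^ℓ) ((k:ℝ)/2^ℓ)) = 0 := by
        rw [hm]
        exact vol_inter_zero (Or.inl (hdivle _ _ (by linarith)))
      rw [hv1, hv2]
      simp
    · -- interval entirely to the right of support : d ≤ a
      have hnat : j * 2^n ≤ k - 1 := by
        have h1 : j ≤ (k-1)/2^n := by omega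
        exact (Nat.le_div_iff_mul_le h2n).mp h1
      have hda : (j:ℝ)*2^n ≤ (k:ℝ)-1 := by
        calc (j:ℝ)*2^n = ((j*2^n : ℕ):ℝ) := by push_cast; ring
          _ ≤ ((k-1:ℕ):ℝ) := by exact_mod_cast hnat
          _ = (k:ℝ)-1 := by rw [Nat.cast_sub hk1]; norm_num
      have hmd : ((j:ℝ)-1)*2^n + 2^(n-1) ≤ (j:ℝ)*2^n := by
        nlinarith [hhalf, h2nR]
      have hv1 : volume (Ico (((j:ℝ)-1)/2^i) (((j:ℝ)-1/2)/2^i) ∩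
          Ioc (((k:ℝ)-1)/2^ℓ) ((k:ℝ)/2^ℓ)) = 0 := by
        rw [hm]
        exact vol_inter_zero (Or.inr (hdivle _ _ (by linarith)))
      have hv2 : volume (Ico (((j:ℝ)-1/2)/2^i) ((j:ℝ)/2^i) ∩
          Ioc (((k:ℝ)-1)/2^ℓ) ((k:ℝ)/2^ℓ)) = 0 := by
        rw [hd]
        exact vol_inter_zero (Or.inr (hdivle _ _ hda))
      rw [hv1, hv2]
      simp

lemma sum_schauderInc_sq (ℓ k : ℕ) (hk1 : 1 ≤ k) (hk2 : k ≤ 2^ℓ) :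
    (schauderInc 0 1 k ℓ)^2 +
      ∑ i ∈ Finset.Icc 1 ℓ, ∑ j ∈ Finset.Icc 1 (2^(i-1)), (schauderInc i j k ℓ)^2
      = ((2:ℝ)^ℓ)⁻¹ := by
  have hinner : ∀ i ∈ Finset.Icc 1 ℓ,
      ∑ j ∈ Finset.Icc 1 (2^(i-1)), (schauderInc i j k ℓ)^2
        = (2:ℝ)^(i-1) * (((2:ℝ)^ℓ)⁻¹)^2 := by
    intro i hi
    rw [Finset.mem_Icc] at hi
    have hi1 : i = (i-1) + 1 := by omega
    have hstep : ∀ j ∈ Finset.Icc 1 (2^(i-1)), (schauderInc i j k ℓ)^2 =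
        if j = (k-1)/2^(ℓ-(i-1)) + 1 then (2:ℝ)^(i-1) * (((2:ℝ)^ℓ)⁻¹)^2 else 0 := by
      intro j hj
      rw [Finset.mem_Icc] at hj
      conv_lhs => rw [hi1]
      exact schauderInc_sq (i-1) j k ℓ (by omega) hk1 hk2 hj.1
    rw [Finset.sum_congr rfl hstep, Finset.sum_ite_eq' (Finset.Icc 1 (2^(i-1)))]
    have hmem : (k-1)/2^(ℓ-(i-1)) + 1 ∈ Finset.Icc 1 (2^(i-1)) := by
      rw [Finset.mem_Icc]
      refine ⟨Nat.succ_le_succ (Nat.zero_le _), ?_⟩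
      have h2n : (0:ℕ) < 2^(ℓ-(i-1)) := Nat.pow_pos (by norm_num)
      have : (k-1)/2^(ℓ-(i-1)) < 2^(i-1) := by
        rw [Nat.div_lt_iff_lt_mul h2n]
        calc k - 1 < 2^ℓ := by omega
          _ = 2^(i-1) * 2^(ℓ-(i-1)) := by rw [← pow_add]; congr 1; omega
      omega
    rw [if_pos hmem]
  rw [Finset.sum_congr rfl hinner, schauderInc_zero]
  have hre : ∑ i ∈ Finset.Icc 1 ℓ, (2:ℝ)^(i-1) = ∑ t ∈ Finset.range ℓ, (2:ℝ)^t := by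
    refine Finset.sum_nbij' (fun i => i - 1) (fun t => t + 1) ?_ ?_ ?_ ?_ ?_ <;>
      intros a ha <;> simp only [Finset.mem_Icc, Finset.mem_range] at * <;>
      first
        | omega
        | (congr 1; omega)
  have hgeom : ∑ t ∈ Finset.range ℓ, (2:ℝ)^t = 2^ℓ - 1 := by
    have := geom_sum_eq (show (2:ℝ) ≠ 1 by norm_num) ℓ
    rw [this]; norm_num
  rw [← Finset.sum_mul, hre, hgeom]
  have h2ℓ : (0:ℝ) < 2^ℓ := by positivity
  field_simp
  ring


lemma exists_measurable_version (s : Finset ℝ) (f : ℝ → ℝ) :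
    ∃ g : ℝ → ℝ, Measurable g ∧ ∀ x ∈ s, g x = f x := by
  classical
  refine ⟨fun x => ∑ y ∈ s, Set.indicator {y} (fun _ => f y) x, ?_, ?_⟩
  · exact Finset.measurable_sum _ fun y _ =>
      (measurable_const).indicator (measurableSet_singleton y)
  · intro x hx
    show (∑ y ∈ s, Set.indicator {y} (fun _ => f y) x) = f x
    rw [Finset.sum_eq_single x]
    · simp
    · intro y _ hyx
      apply Set.indicator_of_notMem
      simp [Ne.symm hyx]
    · intro h; exact absurd hx h

lemma ae_mem_Dq {Ω : Type*} [MeasurableSpace Ω] (P : Measure Ω)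
    (U : Ω → ℝ) (hU : Measurable U) (q : ℕ)
    (hunif : Measure.map U P = uniformOn (Dq q : Set ℝ)) :
    ∀ᵐ ω ∂P, U ω ∈ Dq q := by
  have h1 : ∀ᵐ x ∂(Measure.map U P), x ∈ (Dq q : Set ℝ) := by
    rw [hunif]
    filter_upwards [ae_mem_uniformOn (Dq q)] with x hx
    simpa using hx
  have := (ae_map_iff hU.aemeasurable (Dq q).measurableSet).mp h1
  filter_upwards [this] with ω hω
  simpa using hω

lemma Y_moments {Ω : Type*} [MeasurableSpace Ω] (P : Measure Ω) [IsProbabilityMeasure P]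
    (U : Ω → ℝ) (hU : Measurable U) (q : ℕ) (hq : 1 ≤ q)
    (hunif : Measure.map U P = uniformOn (Dq q : Set ℝ)) :
    (∫ ω, (sigmaq q)⁻¹ * stdNormalCDFInv (U ω) ∂P) = 0 ∧
    (∫ ω, ((sigmaq q)⁻¹ * stdNormalCDFInv (U ω))^2 ∂P) = 1 ∧
    MemLp (fun ω => (sigmaq q)⁻¹ * stdNormalCDFInv (U ω)) 2 P := by
  have hcard : (((Dq q).card : ℕ) : ℝ) = 2^q := by rw [Dq_card]; push_cast; ring
  have key : ∀ f : ℝ → ℝ, ∫ ω, f (U ω) ∂P = (((Dq q).card : ℕ) : ℝ)⁻¹ * ∑ x ∈ Dq q, f x := by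
    intro f
    have h1 : AEStronglyMeasurable f (Measure.map U P) := by
      rw [hunif]; exact aestronglyMeasurable_uniformOn _ f
    rw [← integral_map hU.aemeasurable h1, hunif, integral_uniformOn _ (Dq_nonempty q)]
  have hsigpos := sigmaq_pos hq
  refine ⟨?_, ?_, ?_⟩
  · rw [key (fun x => (sigmaq q)⁻¹ * stdNormalCDFInv x)]
    rw [← Finset.mul_sum, sum_PhiInv_Dq q]
    ring
  · rw [key (fun x => ((sigmaq q)⁻¹ * stdNormalCDFInv x)^2)]
    have : ∀ x : ℝ, ((sigmaq q)⁻¹ * stdNormalCDFInv x)^2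
        = ((sigmaq q)⁻¹)^2 * (stdNormalCDFInv x)^2 := fun x => by ring
    rw [Finset.sum_congr rfl (fun x _ => this x), ← Finset.mul_sum, hcard]
    have hσ := sigmaq_sq (q := q)
    have h2q : (0:ℝ) < 2^q := by positivity
    have hsum : ∑ x ∈ Dq q, stdNormalCDFInv x ^ 2 = (sigmaq q)^2 * 2^q := by
      rw [hσ]; field_simp
    rw [hsum]
    field_simp
  · have haesm : AEStronglyMeasurable (fun ω => (sigmaq q)⁻¹ * stdNormalCDFInv (U ω)) P := by
      have h1 : AEStronglyMeasurable (fun x => (sigmaq q)⁻¹ * stdNormalCDFInv x)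
          (Measure.map U P) := by
        rw [hunif]; exact aestronglyMeasurable_uniformOn _ _
      exact h1.comp_aemeasurable hU.aemeasurable
    refine MemLp.of_bound haesm (∑ y ∈ Dq q, ‖(sigmaq q)⁻¹ * stdNormalCDFInv y‖) ?_
    filter_upwards [ae_mem_Dq P U hU q hunif] with ω hω
    exact Finset.single_le_sum (f := fun y => ‖(sigmaq q)⁻¹ * stdNormalCDFInv y‖)
      (fun y _ => norm_nonneg _) hω

end LCAux

open LCAux in
/-- Lemma 1: the random bit increment `V_{k,ℓ}` has mean zero and variance exactly `2^{-ℓ}`. -/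
theorem randomBitIncrement_mean_variance
    {Ω : Type*} [MeasurableSpace Ω] (P : Measure Ω) [IsProbabilityMeasure P]
    (ℓ k : ℕ) (hk1 : 1 ≤ k) (hk2 : k ≤ 2 ^ ℓ)
    (U : ℕ → ℕ → Ω → ℝ)
    (hmeas : ∀ i j, ValidPair ℓ (i, j) → Measurable (U i j))
    (hunif : ∀ i j, ValidPair ℓ (i, j) →
      Measure.map (U i j) P = uniformOn (Dq (2 * (ℓ + 1 - i)) : Set ℝ))
    (hindep : iIndepFun
      (fun p : { p : ℕ × ℕ // ValidPair ℓ p } => U p.1.1 p.1.2) P)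
    (Y : ℕ → ℕ → Ω → ℝ)
    (hY : ∀ i j, Y i j = fun ω => (sigmaq (2 * (ℓ + 1 - i)))⁻¹ * stdNormalCDFInv (U i j ω))
    (V : Ω → ℝ)
    (hV : V = fun ω => schauderInc 0 1 k ℓ * Y 0 1 ω +
      ∑ i ∈ Finset.Icc 1 ℓ, ∑ j ∈ Finset.Icc 1 (2 ^ (i - 1)), schauderInc i j k ℓ * Y i j ω) :
    (∫ ω, V ω ∂P) = 0 ∧ variance V P = ((2 : ℝ) ^ ℓ)⁻¹ := by
  classical
  set X : ℕ × ℕ → Ω → ℝ := fun p ω => schauderInc p.1 p.2 k ℓ * Y p.1 p.2 ω with hX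
  set S : Finset (ℕ × ℕ) := insert (0, 1)
    ((Finset.Icc 1 ℓ).biUnion fun i => (Finset.Icc 1 (2^(i-1))).image fun j => (i, j)) with hS
  have hnotin : ((0:ℕ), (1:ℕ)) ∉
      (Finset.Icc 1 ℓ).biUnion fun i => (Finset.Icc 1 (2^(i-1))).image fun j => (i, j) := by
    simp only [Finset.mem_biUnion, Finset.mem_image, Finset.mem_Icc, Prod.mk.injEq]
    rintro ⟨i, ⟨hi1, _⟩, j, _, hij, _⟩
    omega
  have hdisj : (↑(Finset.Icc 1 ℓ) : Set ℕ).PairwiseDisjoint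
      (fun i => (Finset.Icc 1 (2^(i-1))).image fun j => (i, j)) := by
    intro a _ b _ hab
    simp only [Finset.disjoint_left, Finset.mem_image]
    rintro p ⟨j, _, rfl⟩ ⟨j', _, hj'⟩
    exact hab (congrArg Prod.fst hj').symm
  have hdecomp : ∀ F : ℕ × ℕ → ℝ, ∑ p ∈ S, F p
      = F (0,1) + ∑ i ∈ Finset.Icc 1 ℓ, ∑ j ∈ Finset.Icc 1 (2^(i-1)), F (i, j) := by
    intro F
    rw [hS, Finset.sum_insert hnotin, Finset.sum_biUnion hdisj]
    congr 1
    refine Finset.sum_congr rfl fun i _ => ?_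
    rw [Finset.sum_image]
    intro a _ b _ hab
    exact (Prod.mk.injEq .. ▸ hab).2
  have hmemS : ∀ p ∈ S, ValidPair ℓ p := by
    intro p hp
    rw [hS, Finset.mem_insert] at hp
    rcases hp with hp | hp
    · exact Or.inl hp
    · simp only [Finset.mem_biUnion, Finset.mem_image, Finset.mem_Icc] at hp
      obtain ⟨i, hi, j, hj, rfl⟩ := hp
      exact Or.inr ⟨hi.1, hi.2, hj.1, hj.2⟩
  have hple : ∀ p : ℕ × ℕ, ValidPair ℓ p → p.1 ≤ ℓ := by
    rintro p (hp | hp)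
    · rw [hp]; exact Nat.zero_le ℓ
    · exact hp.2.1
  have hq1 : ∀ p : ℕ × ℕ, ValidPair ℓ p → 1 ≤ 2 * (ℓ + 1 - p.1) := by
    intro p hp
    have := hple p hp
    omega
  -- moments for each valid pair
  have hmom : ∀ p : ℕ × ℕ, ValidPair ℓ p →
      (∫ ω, Y p.1 p.2 ω ∂P) = 0 ∧ (∫ ω, (Y p.1 p.2 ω)^2 ∂P) = 1 ∧
        MemLp (Y p.1 p.2) 2 P := by
    intro p hp
    have h := Y_moments P (U p.1 p.2) (hmeas p.1 p.2 hp) (2 * (ℓ + 1 - p.1)) (hq1 p hp)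
      (hunif p.1 p.2 hp)
    rw [hY p.1 p.2]
    exact h
  have hXint : ∀ p : ℕ × ℕ, ValidPair ℓ p → (∫ ω, X p ω ∂P) = 0 := by
    intro p hp
    have : (∫ ω, X p ω ∂P) = schauderInc p.1 p.2 k ℓ * ∫ ω, Y p.1 p.2 ω ∂P :=
      integral_const_mul _ _
    rw [this, (hmom p hp).1, mul_zero]
  have hXmem : ∀ p : ℕ × ℕ, ValidPair ℓ p → MemLp (X p) 2 P := by
    intro p hp
    exact ((hmom p hp).2.2).const_mul _
  have hXvar : ∀ p : ℕ × ℕ, ValidPair ℓ p →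
      variance (X p) P = (schauderInc p.1 p.2 k ℓ)^2 := by
    intro p hp
    rw [variance_eq_sub (hXmem p hp)]
    have h1 : P[(X p)^2] = (schauderInc p.1 p.2 k ℓ)^2 * ∫ ω, (Y p.1 p.2 ω)^2 ∂P := by
      have : (X p)^2 = fun ω => (schauderInc p.1 p.2 k ℓ)^2 * (Y p.1 p.2 ω)^2 := by
        funext ω
        simp only [Pi.pow_apply, hX]
        ring
      rw [this]
      exact integral_const_mul _ _
    rw [h1, (hmom p hp).2.1, hXint p hp]
    ring
  -- independence of the X's
  have hXindep : (↑S : Set (ℕ × ℕ)).Pairwise fun p p' => IndepFun (X p) (X p') P := by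
    intro p hp p' hp' hne
    have hvp := hmemS p (by exact_mod_cast hp)
    have hvp' := hmemS p' (by exact_mod_cast hp')
    have hUind : IndepFun (U p.1 p.2) (U p'.1 p'.2) P := by
      have := hindep.indepFun (i := ⟨p, hvp⟩) (j := ⟨p', hvp'⟩) (by simpa using hne)
      exact this
    obtain ⟨g, hgm, hg⟩ := exists_measurable_version (Dq (2 * (ℓ + 1 - p.1)))
      (fun x => schauderInc p.1 p.2 k ℓ * ((sigmaq (2 * (ℓ + 1 - p.1)))⁻¹ * stdNormalCDFInv x))
    obtain ⟨g', hgm', hg'⟩ := exists_measurable_version (Dq (2 * (ℓ + 1 - p'.1)))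
      (fun x => schauderInc p'.1 p'.2 k ℓ * ((sigmaq (2 * (ℓ + 1 - p'.1)))⁻¹ * stdNormalCDFInv x))
    have hae : g ∘ (U p.1 p.2) =ᵐ[P] X p := by
      filter_upwards [ae_mem_Dq P (U p.1 p.2) (hmeas p.1 p.2 hvp) _ (hunif p.1 p.2 hvp)]
        with ω hω
      simp only [Function.comp_apply, hX, hY p.1 p.2]
      exact hg _ hω
    have hae' : g' ∘ (U p'.1 p'.2) =ᵐ[P] X p' := by
      filter_upwards [ae_mem_Dq P (U p'.1 p'.2) (hmeas p'.1 p'.2 hvp') _ (hunif p'.1 p'.2 hvp')]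
        with ω hω
      simp only [Function.comp_apply, hX, hY p'.1 p'.2]
      exact hg' _ hω
    exact ProbabilityTheory.IndepFun.congr (hUind.comp hgm hgm') hae hae'
  have hVX : V = ∑ p ∈ S, X p := by
    funext ω
    rw [hV]
    rw [Finset.sum_apply]
    exact (hdecomp (fun p => schauderInc p.1 p.2 k ℓ * Y p.1 p.2 ω)).symm
  constructor
  · rw [hVX]
    have : ∫ ω, (∑ p ∈ S, X p) ω ∂P = ∑ p ∈ S, ∫ ω, X p ω ∂P := by
      simp only [Finset.sum_apply]
      exact integral_finset_sum S fun p hp => ((hXmem p (hmemS p hp)).integrable one_le_two)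
    rw [this]
    exact Finset.sum_eq_zero fun p hp => hXint p (hmemS p hp)
  · rw [hVX]
    rw [IndepFun.variance_sum (fun p hp => hXmem p (hmemS p hp)) hXindep]
    rw [Finset.sum_congr rfl (fun p hp => hXvar p (hmemS p hp))]
    rw [hdecomp (fun p => (schauderInc p.1 p.2 k ℓ)^2)]
    exact sum_schauderInc_sq ℓ k hk1 hk2
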